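/- Let V be a nonzero finite-dimensional inner product space over ℂ, let T : V →ₗ[ℂ] V be symmetric (⟪T x, y⟫ = ⟪x, T y⟫ for all x, y), let A : V →ₗ[ℂ] V satisfy T ∘ A = A ∘ T, and let λ : ℂ be such that the eigenspace W = {ψ : A ψ = λ • ψ} contains a unit vector. Then there exist a vector w with ‖w‖ = 1, A w = λ • w, and a real number μ such that T w = (μ : ℂ) • w, μ = re ⟪w, T w⟫, and μ ≤ re ⟪ψ, T ψ⟫ for every ψ with ‖ψ‖ = 1 and A ψ = λ • ψ. That is, the constrained variational minimum of the Rayleigh quotient of T over the λ-eigenspace of A is attained and the minimizer is an eigenvector of T lying in that eigenspace (Gunnarsson–Lundqvist theorem). -/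

import Mathlib

open scoped InnerProductSpace

/-- **Gunnarsson–Lundqvist theorem** (constrained variational principle):
the minimum of the Rayleigh quotient of a symmetric operator `T` over the
`λ`-eigenspace of a commuting operator `A` is attained, and the minimizer is an
eigenvector of `T` lying in that eigenspace. -/
theorem gunnarsson_lundqvist
    {V : Type*} [NormedAddCommGroup V] [InnerProductSpace ℂ V]
    [FiniteDimensional ℂ V] [Nontrivial V]
    (T A : V →ₗ[ℂ] V)
    (hT : ∀ x y : V, ⟪T x, y⟫_ℂ = ⟪x, T y⟫_ℂ)
    (hTA : T ∘ₗ A = A ∘ₗ T)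
    (lam : ℂ)
    (hW : ∃ ψ : V, ‖ψ‖ = 1 ∧ A ψ = lam • ψ) :
    ∃ (w : V) (μ : ℝ), ‖w‖ = 1 ∧ A w = lam • w ∧ T w = (μ : ℂ) • w ∧
      μ = (⟪w, T w⟫_ℂ).re ∧
      ∀ ψ : V, ‖ψ‖ = 1 → A ψ = lam • ψ → μ ≤ (⟪ψ, T ψ⟫_ℂ).re := by
  classical
  obtain ⟨ψ₀, hψ₀, hAψ₀⟩ := hW
  set W : Submodule ℂ V := Module.End.eigenspace A lam with hWdef
  have memW : ∀ x : V, x ∈ W ↔ A x = lam • x := by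
    intro x
    rw [hWdef, Module.End.mem_eigenspace_iff]
  have hψ₀W : ψ₀ ∈ W := (memW ψ₀).mpr hAψ₀
  have hmaps : ∀ x ∈ W, T x ∈ W := by
    intro x hx
    rw [memW] at hx ⊢
    have h := LinearMap.congr_fun hTA x
    simp only [LinearMap.comp_apply] at h
    rw [← h, hx, map_smul]
  let S : ↥W →ₗ[ℂ] ↥W := T.restrict hmaps
  have hScoe : ∀ x : W, (S x : V) = T x := fun x => rfl
  have hSsymm : S.IsSymmetric := by
    intro x y
    rw [Submodule.coe_inner, Submodule.coe_inner, hScoe, hScoe]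
    exact hT x y
  let S' : ↥W →L[ℂ] ↥W := LinearMap.toContinuousLinearMap S
  have hS'sa : IsSelfAdjoint S' := by
    rw [ContinuousLinearMap.isSelfAdjoint_iff_isSymmetric]
    exact hSsymm
  haveI := FiniteDimensional.proper_rclike ℂ (↥W)
  have hψ₀' : (⟨ψ₀, hψ₀W⟩ : W) ∈ Metric.sphere (0 : W) 1 := by
    simp [Submodule.norm_coe, hψ₀]
  obtain ⟨x₀, hx₀mem, hmin⟩ :=
    (isCompact_sphere (0 : W) 1).exists_isMinOn ⟨_, hψ₀'⟩
      S'.reApplyInnerSelf_continuous.continuousOn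
  have hx₀norm : ‖x₀‖ = 1 := by simpa using hx₀mem
  have hx₀ne : x₀ ≠ 0 := by
    intro h; rw [h] at hx₀norm; simp at hx₀norm
  have hmin' : IsMinOn S'.reApplyInnerSelf (Metric.sphere (0 : W) ‖x₀‖) x₀ := by
    rwa [hx₀norm]
  have heig := hS'sa.eq_smul_self_of_isLocalExtrOn (Or.inl hmin'.localize)
  set w : V := (x₀ : V) with hwdef
  have hwnorm : ‖w‖ = 1 := by
    rw [hwdef, show ‖(x₀ : V)‖ = ‖x₀‖ from Submodule.norm_coe x₀]; exact hx₀norm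
  have hray : S'.rayleighQuotient x₀ = (⟪w, T w⟫_ℂ).re := by
    have : ⟪T w, w⟫_ℂ = ⟪w, T w⟫_ℂ := hT w w
    simp only [ContinuousLinearMap.rayleighQuotient, ContinuousLinearMap.reApplyInnerSelf,
      hx₀norm]
    rw [show ⟪S' x₀, x₀⟫_ℂ = ⟪T w, w⟫_ℂ from Submodule.coe_inner W _ _, this]
    simp
  refine ⟨w, (⟪w, T w⟫_ℂ).re, hwnorm, (memW w).mp x₀.2, ?_, rfl, ?_⟩
  · have := congrArg (Subtype.val : W → V) heig
    rw [hray] at this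
    rw [Complex.coe_smul]; exact this
  · intro ψ hψnorm hAψ
    have hψmem : ψ ∈ W := (memW ψ).mpr hAψ
    have hsph : (⟨ψ, hψmem⟩ : W) ∈ Metric.sphere (0 : W) 1 := by
      simp [Submodule.norm_coe, hψnorm]
    have := hmin hsph
    have h1 : S'.reApplyInnerSelf x₀ = (⟪w, T w⟫_ℂ).re := by
      rw [ContinuousLinearMap.reApplyInnerSelf_apply,
        show ⟪S' x₀, x₀⟫_ℂ = ⟪T w, w⟫_ℂ from Submodule.coe_inner W _ _, hT w w]
      rfl
    have h2 : S'.reApplyInnerSelf ⟨ψ, hψmem⟩ = (⟪ψ, T ψ⟫_ℂ).re := by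
      rw [ContinuousLinearMap.reApplyInnerSelf_apply,
        show ⟪S' ⟨ψ, hψmem⟩, (⟨ψ, hψmem⟩ : W)⟫_ℂ = ⟪T ψ, ψ⟫_ℂ from Submodule.coe_inner W _ _,
        hT ψ ψ]
      rfl
    rw [← h1, ← h2]
    exact this
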